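/- Let h be the formal power series over ℚ given by h = Σ_{n≥0} (L n / n!)·Xⁿ. Then (1 − X − (1/2)·X²) · h = X + X² in ℚ⟦X⟧; equivalently, the exponential generating function of L is (x + x²)/(1 − x − x²/2). -/

import Mathlib

open PowerSeries Finset

/-- A power series with zero constant coefficient satisfying `f' = w * f` is zero. -/
lemma ode_zero (v w : ℚ⟦X⟧) (h0 : PowerSeries.coeff 0 v = 0)
    (hd : d⁄dX ℚ v = w * v) : v = 0 := by
  ext n
  induction n using Nat.strong_induction_on with
  | _ n ih =>
    match n with
    | 0 => simpa using h0
    | k + 1 =>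
      have h1 : PowerSeries.coeff k (d⁄dX ℚ v) = PowerSeries.coeff k (w * v) := by
        rw [hd]
      rw [PowerSeries.coeff_derivative, PowerSeries.coeff_mul] at h1
      have h2 : ∑ p ∈ Finset.HasAntidiagonal.antidiagonal k,
          PowerSeries.coeff p.1 w * PowerSeries.coeff p.2 v = 0 := by
        apply Finset.sum_eq_zero
        intro p hp
        have hpk : p.2 ≤ k := by
          have := Finset.HasAntidiagonal.mem_antidiagonal.mp hp
          omega
        rw [ih p.2 (by omega)]
        simp
      rw [h2] at h1
      have hk : ((k : ℚ) + 1) ≠ 0 := by positivity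
      simpa using (mul_eq_zero.mp h1).resolve_right hk

theorem egf_L (G : ℕ → ℕ) (hG0 : G 0 = 1)
    (hG : ∀ n : ℕ, 1 ≤ n →
      G n = (∑ i ∈ Finset.Icc 1 n,
              Nat.choose (n - 1) (i - 1) * G (n - i) * G (i - 1)) +
            (∑ i ∈ Finset.Icc 1 (n - 1),
              (n - i) * Nat.choose (n - 1) (i - 1) * G (n - i - 1) * G (i - 1)))
    (L : ℕ → ℕ) (hL0 : L 0 = 0)
    (hL : ∀ n : ℕ, 1 ≤ n →
      L n = n * G (n - 1) + n * (n - 1) * G (n - 2)) :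
    (1 - PowerSeries.X - PowerSeries.C (1 / 2 : ℚ) * PowerSeries.X ^ 2) *
      PowerSeries.mk (fun n => (L n : ℚ) / (Nat.factorial n : ℚ)) =
      PowerSeries.X + PowerSeries.X ^ 2 := by
  set B : ℕ → ℚ := fun n => (G n : ℚ) / (Nat.factorial n : ℚ) with hB
  set g : ℚ⟦X⟧ := PowerSeries.mk B with hg
  set q : ℚ⟦X⟧ := 1 - PowerSeries.X - PowerSeries.C (1 / 2 : ℚ) * PowerSeries.X ^ 2 with hq
  -- Step A: the ODE for g
  have stepA : d⁄dX ℚ g = (1 + X) * (g * g) := by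
    ext m
    rw [PowerSeries.coeff_derivative]
    have hgm : PowerSeries.coeff m (g * g) =
        ∑ k ∈ Finset.range (m + 1), B k * B (m - k) := by
      rw [PowerSeries.coeff_mul, Finset.Nat.sum_antidiagonal_eq_sum_range_succ_mk]
      simp [hg]
    -- recurrence at n = m+1
    have hrec := hG (m + 1) (by omega)
    simp only [Nat.add_sub_cancel] at hrec
    -- first sum
    have hs1 : ((∑ i ∈ Finset.Icc 1 (m + 1),
        Nat.choose m (i - 1) * G (m + 1 - i) * G (i - 1) : ℕ) : ℚ) =
        (Nat.factorial m : ℚ) * ∑ k ∈ Finset.range (m + 1), B k * B (m - k) := by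
      push_cast
      rw [← Finset.Ico_add_one_right_eq_Icc, Finset.sum_Ico_eq_sum_range]
      simp only [Nat.succ_sub_one, Nat.add_sub_cancel]
      rw [Finset.mul_sum]
      apply Finset.sum_congr (by norm_num)
      intro k hk
      have hkm : k ≤ m := by have := Finset.mem_range.mp hk; omega
      have h1 : 1 + k - 1 = k := by omega
      have h2 : m + 1 - (1 + k) = m - k := by omega
      rw [h1, h2, hB]
      have hfac : (Nat.choose m k * Nat.factorial k * Nat.factorial (m - k) : ℕ) =
          Nat.factorial m := Nat.choose_mul_factorial_mul_factorial hkm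
      have hf : (Nat.factorial m : ℚ) =
          (Nat.choose m k : ℚ) * Nat.factorial k * Nat.factorial (m - k) := by
        exact_mod_cast hfac.symm
      rw [hf]
      have hk0 : (Nat.factorial k : ℚ) ≠ 0 := by
        exact_mod_cast Nat.factorial_ne_zero k
      have hk1 : (Nat.factorial (m - k) : ℚ) ≠ 0 := by
        exact_mod_cast Nat.factorial_ne_zero (m - k)
      field_simp
    -- second sum
    have hs2 : ((∑ i ∈ Finset.Icc 1 m,
        (m + 1 - i) * Nat.choose m (i - 1) * G (m + 1 - i - 1) * G (i - 1) : ℕ) : ℚ) =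
        (Nat.factorial m : ℚ) *
          PowerSeries.coeff m (PowerSeries.X * (g * g)) := by
      match m with
      | 0 => simp
      | Nat.succ p =>
        rw [PowerSeries.coeff_succ_X_mul]
        have hgp : PowerSeries.coeff p (g * g) =
            ∑ k ∈ Finset.range (p + 1), B k * B (p - k) := by
          rw [PowerSeries.coeff_mul, Finset.Nat.sum_antidiagonal_eq_sum_range_succ_mk]
          simp [hg]
        rw [hgp]
        push_cast
        rw [← Finset.Ico_add_one_right_eq_Icc, Finset.sum_Ico_eq_sum_range]
        rw [Finset.mul_sum]
        apply Finset.sum_congr (by norm_num)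
        intro k hk
        have hkp : k ≤ p := by
          have := Finset.mem_range.mp hk; omega
        simp only [Nat.succ_eq_add_one]
        have h1 : 1 + k - 1 = k := by omega
        have h2 : p + 1 + 1 - (1 + k) - 1 = p - k := by omega
        have h4 : p + 1 + 1 - (1 + k) = p + 1 - k := by omega
        rw [h1, h2, h4, hB]
        have hfac : ((p + 1 - k) * Nat.choose (p + 1) k * Nat.factorial k *
            Nat.factorial (p - k) : ℕ) = Nat.factorial (p + 1) := by
          have e1 : (p + 1 - k) * Nat.factorial (p - k) = Nat.factorial (p + 1 - k) := by
            have : p + 1 - k = (p - k) + 1 := by omega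
            rw [this, Nat.factorial_succ]
          calc (p + 1 - k) * Nat.choose (p + 1) k * Nat.factorial k * Nat.factorial (p - k)
              = Nat.choose (p + 1) k * Nat.factorial k *
                ((p + 1 - k) * Nat.factorial (p - k)) := by ring
            _ = Nat.choose (p + 1) k * Nat.factorial k * Nat.factorial (p + 1 - k) := by
                rw [e1]
            _ = Nat.factorial (p + 1) :=
                Nat.choose_mul_factorial_mul_factorial (by omega)
        have hf : (Nat.factorial (p + 1) : ℚ) =
            ((p + 1 - k : ℕ) : ℚ) * (Nat.choose (p + 1) k : ℚ) * Nat.factorial k *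
              Nat.factorial (p - k) := by
          exact_mod_cast hfac.symm
        rw [hf]
        have hk0 : (Nat.factorial k : ℚ) ≠ 0 := by
          exact_mod_cast Nat.factorial_ne_zero k
        have hk1 : (Nat.factorial (p - k) : ℚ) ≠ 0 := by
          exact_mod_cast Nat.factorial_ne_zero (p - k)
        field_simp
    -- assemble
    have hLHS : PowerSeries.coeff (m + 1) g * ((m : ℚ) + 1) =
        ((G (m + 1) : ℚ)) / (Nat.factorial m : ℚ) := by
      simp only [hg, PowerSeries.coeff_mk, hB]
      rw [Nat.factorial_succ]
      have hm0 : (Nat.factorial m : ℚ) ≠ 0 := by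
        exact_mod_cast Nat.factorial_ne_zero m
      push_cast
      field_simp
    rw [hLHS]
    have hRHS : PowerSeries.coeff m ((1 + X) * (g * g)) =
        PowerSeries.coeff m (g * g) + PowerSeries.coeff m (X * (g * g)) := by
      rw [add_mul, one_mul, map_add]
    rw [hRHS, hgm]
    have hm0 : (Nat.factorial m : ℚ) ≠ 0 := by
      exact_mod_cast Nat.factorial_ne_zero m
    rw [div_eq_iff hm0]
    have := congrArg (fun x : ℕ => (x : ℚ)) hrec
    simp only [Nat.cast_add] at this
    rw [this, hs1, hs2, ← hgm]
    ring
  -- Step B: h = (X + X^2) * g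
  have stepB : PowerSeries.mk (fun n => (L n : ℚ) / (Nat.factorial n : ℚ)) =
      (PowerSeries.X + PowerSeries.X ^ 2) * g := by
    ext n
    rw [add_mul, map_add]
    match n with
    | 0 => simp [hL0]
    | 1 =>
      have hX2 : (PowerSeries.X ^ 2 * g : ℚ⟦X⟧) = X * (X * g) := by ring
      rw [hX2, PowerSeries.coeff_succ_X_mul, PowerSeries.coeff_succ_X_mul]
      have : PowerSeries.coeff 0 (X * g) = 0 := by simp
      rw [this]
      have hl1 := hL 1 (by omega)
      simp [hl1, hg, hB, hG0]
    | Nat.succ (Nat.succ k) =>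
      have hX2 : (PowerSeries.X ^ 2 * g : ℚ⟦X⟧) = X * (X * g) := by ring
      rw [hX2, PowerSeries.coeff_succ_X_mul, PowerSeries.coeff_succ_X_mul,
        PowerSeries.coeff_succ_X_mul]
      have hl := hL (k + 2) (by omega)
      have h1 : k + 2 - 1 = k + 1 := by omega
      have h2 : k + 2 - 2 = k := by omega
      rw [h1, h2] at hl
      simp only [Nat.succ_eq_add_one, hg, PowerSeries.coeff_mk, hB, hl]
      rw [Nat.factorial_succ (k+1), Nat.factorial_succ k]
      have hk0 : (Nat.factorial k : ℚ) ≠ 0 := by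
        exact_mod_cast Nat.factorial_ne_zero k
      push_cast
      field_simp
      ring
  -- Step C: q * g = 1
  have stepC : q * g = 1 := by
    have hu0 : PowerSeries.coeff 0 (q * g - 1) = 0 := by
      rw [map_sub, PowerSeries.coeff_zero_eq_constantCoeff, map_mul]
      simp [hq, hg, hB, hG0]
    have hdq : d⁄dX ℚ q = -(1 + X) := by
      rw [hq]
      rw [map_sub, map_sub]
      have hX2 : d⁄dX ℚ (PowerSeries.C (1/2 : ℚ) * PowerSeries.X ^ 2) = X := by
        rw [pow_two, ← mul_assoc, Derivation.leibniz, Derivation.leibniz]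
        simp only [smul_eq_mul, derivative_X, mul_one, PowerSeries.derivative_C, mul_zero, add_zero, zero_add]
        have h2 : (2 : ℚ⟦X⟧) = PowerSeries.C (2 : ℚ) := by
          rw [map_ofNat]
        calc PowerSeries.C (1/2 : ℚ) * PowerSeries.X + PowerSeries.X * PowerSeries.C (1/2 : ℚ)
            = PowerSeries.C (1/2 : ℚ) * 2 * PowerSeries.X := by ring
          _ = X := by rw [h2, ← map_mul]; norm_num
      rw [hX2]
      simp
      ring
    have hdu : d⁄dX ℚ (q * g - 1) = ((1 + X) * g) * (q * g - 1) := by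
      rw [map_sub, Derivation.leibniz, Derivation.map_one_eq_zero]
      simp only [smul_eq_mul]
      rw [hdq, stepA]
      ring
    have := ode_zero (q * g - 1) ((1 + X) * g) hu0 hdu
    linear_combination this
  rw [stepB]
  calc q * ((PowerSeries.X + PowerSeries.X ^ 2) * g)
      = (PowerSeries.X + PowerSeries.X ^ 2) * (q * g) := by ring
    _ = PowerSeries.X + PowerSeries.X ^ 2 := by rw [stepC, mul_one]
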